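/- The formula c_1(x) ∧ c_2(x) ∧ … ∧ c_m(x) is satisfiable if and only if there exists a sequence t ∈ {0,1}^{n+1+⌈log₂ m⌉} with occ_root^G(t) = m; equivalently, the formula is satisfiable if and only if the maximum of occ_root^G(t) over all t ∈ {0,1}^{n+1+⌈log₂ m⌉} equals m. -/

import Mathlib

namespace GraphDB

/-- Vertices of the graph `G` produced by the SAT reduction.
`node k p` is the vertex of the binary tree at depth `k` and position `p`
(in heap-style ordering); in particular `node 0 0` is the root and, with
`d = ⌈log₂ m⌉`, the leaf `node d (i-1)` is the clause vertex `c_i`.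
`u i j` and `v i j` are the vertices `u_i^j` and `v_i^j` (with `i = 0`
giving `u_0^j`, `v_0^j`). -/
inductive Vtx : Type
  | node (k p : ℕ)
  | u (i j : ℕ)
  | v (i j : ℕ)
  deriving DecidableEq

/-- The edge relation of the graph `G` obtained from the SAT instance with
`n` variables `x_1, …, x_n` and `m` clauses `c_1, …, c_m`, where
`c i j = some true` means that the literal `x_j` occurs in clause `c_i`,
`c i j = some false` means that the literal `¬x_j` occurs in `c_i`, and
`c i j = none` means that the variable `x_j` does not occur in `c_i`. -/
def Edge (n m : ℕ) (c : ℕ → ℕ → Option Bool) : Vtx → Vtx → Prop := fun a b =>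
  match a, b with
  | .node k p, .node k' q =>
      k' = k + 1 ∧ k' ≤ Nat.clog 2 m ∧ (q = 2 * p ∨ q = 2 * p + 1) ∧
        q * 2 ^ (Nat.clog 2 m - k') < m
  | .node k p, .u i j => k = Nat.clog 2 m ∧ p < m ∧ i = p + 1 ∧ j = 1
  | .node k p, .v i j => k = Nat.clog 2 m ∧ p < m ∧ i = p + 1 ∧ j = 1
  | .u i j, .u i' j' =>
      j' = j + 1 ∧
        ((i = 0 ∧ i' = 0 ∧ 2 ≤ j ∧ j + 1 ≤ n) ∨
         (1 ≤ i ∧ i ≤ m ∧ i' = 0 ∧ 1 ≤ j ∧ j + 1 ≤ n ∧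
            (c i j = some true ∨ (j + 1 = n ∧ c i n = some true))) ∨
         (1 ≤ i ∧ i ≤ m ∧ i' = i ∧ 1 ≤ j ∧ j + 2 ≤ n ∧ c i j ≠ some true))
  | .u i j, .v i' j' =>
      j' = j + 1 ∧
        ((i = 0 ∧ i' = 0 ∧ 2 ≤ j ∧ j + 1 ≤ n) ∨
         (1 ≤ i ∧ i ≤ m ∧ i' = 0 ∧ 1 ≤ j ∧ j + 1 ≤ n ∧
            (c i j = some true ∨ (j + 1 = n ∧ c i n = some false))) ∨
         (1 ≤ i ∧ i ≤ m ∧ i' = i ∧ 1 ≤ j ∧ j + 2 ≤ n ∧ c i j ≠ some true))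
  | .v i j, .u i' j' =>
      j' = j + 1 ∧
        ((i = 0 ∧ i' = 0 ∧ 2 ≤ j ∧ j + 1 ≤ n) ∨
         (1 ≤ i ∧ i ≤ m ∧ i' = 0 ∧ 1 ≤ j ∧ j + 1 ≤ n ∧
            (c i j = some false ∨ (j + 1 = n ∧ c i n = some true))) ∨
         (1 ≤ i ∧ i ≤ m ∧ i' = i ∧ 1 ≤ j ∧ j + 2 ≤ n ∧ c i j ≠ some false))
  | .v i j, .v i' j' =>
      j' = j + 1 ∧
        ((i = 0 ∧ i' = 0 ∧ 2 ≤ j ∧ j + 1 ≤ n) ∨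
         (1 ≤ i ∧ i ≤ m ∧ i' = 0 ∧ 1 ≤ j ∧ j + 1 ≤ n ∧
            (c i j = some false ∨ (j + 1 = n ∧ c i n = some false))) ∨
         (1 ≤ i ∧ i ≤ m ∧ i' = i ∧ 1 ≤ j ∧ j + 2 ≤ n ∧ c i j ≠ some false))
  | _, _ => False

/-- The vertex labeling `ℓ` of `G`: the vertices `v_i^j` are labeled `0`
(`false`), all other vertices are labeled `1` (`true`). -/
def lab : Vtx → Bool
  | .v _ _ => false
  | _ => true

/-- The starting vertex `root` of `G`. -/
def root : Vtx := .node 0 0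

/-- `occG n m c a t` is `occ_a^G(t)`: the number of walks `w_1 w_2 … w_k`
in `G` with `w_1 = a` and `ℓ(w_j) = t_j` for all `j ∈ {1, …, k}`. -/
noncomputable def occG (n m : ℕ) (c : ℕ → ℕ → Option Bool) (a : Vtx) (t : List Bool) : ℕ :=
  Set.ncard {w : List Vtx | List.Chain' (Edge n m c) w ∧ w.head? = some a ∧ w.map lab = t}

end GraphDB

namespace GraphDB

open Classical in
/-- track index at level `j` for the canonical walk of clause `i` -/
noncomputable def trk (c : ℕ → ℕ → Option Bool) (n i : ℕ) (s : ℕ → Bool) (j : ℕ) : ℕ :=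
  if j = n ∨ ∃ j', 1 ≤ j' ∧ j' < j ∧ c i j' = some (s j') then 0 else i

/-- `u` or `v` according to a boolean label -/
def U (b : Bool) (i j : ℕ) : Vtx := if b then .u i j else .v i j

noncomputable def vtxAt (c : ℕ → ℕ → Option Bool) (n i : ℕ) (s : ℕ → Bool) (j : ℕ) : Vtx :=
  U (s j) (trk c n i s j) j

noncomputable def walkOf (c : ℕ → ℕ → Option Bool) (d n i : ℕ) (s : ℕ → Bool) : List Vtx :=
  ((List.range (d+1)).map fun k => Vtx.node k ((i-1) / 2^(d-k))) ++
  ((List.range n).map fun a => vtxAt c n i s (a+1))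

@[simp] lemma lab_U (b : Bool) (i j : ℕ) : lab (U b i j) = b := by
  cases b <;> rfl

lemma edge_U_iff (n m : ℕ) (c : ℕ → ℕ → Option Bool) (b b' : Bool) (T j T' j' : ℕ) :
    Edge n m c (U b T j) (U b' T' j') ↔ j' = j + 1 ∧
      ((T = 0 ∧ T' = 0 ∧ 2 ≤ j ∧ j + 1 ≤ n) ∨
       (1 ≤ T ∧ T ≤ m ∧ T' = 0 ∧ 1 ≤ j ∧ j + 1 ≤ n ∧
          (c T j = some b ∨ (j + 1 = n ∧ c T n = some b'))) ∨
       (1 ≤ T ∧ T ≤ m ∧ T' = T ∧ 1 ≤ j ∧ j + 2 ≤ n ∧ c T j ≠ some b)) := by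
  cases b <;> cases b' <;> simp [U, Edge]

lemma walkOf_length (c : ℕ → ℕ → Option Bool) (d n i : ℕ) (s : ℕ → Bool) :
    (walkOf c d n i s).length = d + 1 + n := by
  simp [walkOf]

lemma walkOf_get (c : ℕ → ℕ → Option Bool) (d n i : ℕ) (s : ℕ → Bool)
    (k : ℕ) (h : k < d + 1 + n) :
    (walkOf c d n i s)[k]'(by rw [walkOf_length]; exact h) =
      if k ≤ d then Vtx.node k ((i-1) / 2^(d-k)) else vtxAt c n i s (k - d) := by
  simp only [walkOf]
  rw [List.getElem_append]
  split
  · next h' =>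
    rw [if_pos (by simpa using Nat.lt_succ_iff.mp (by simpa using h'))]
    simp
  · next h' =>
    simp only [List.length_map, List.length_range] at h' ⊢
    rw [if_neg (by omega)]
    simp only [List.getElem_map, List.getElem_range]
    congr 1
    omega

lemma trk_zero (c : ℕ → ℕ → Option Bool) (n i : ℕ) (s : ℕ → Bool) (j : ℕ)
    (h : j = n ∨ ∃ j', 1 ≤ j' ∧ j' < j ∧ c i j' = some (s j')) :
    trk c n i s j = 0 := by
  rw [trk, if_pos h]

lemma trk_self (c : ℕ → ℕ → Option Bool) (n i : ℕ) (s : ℕ → Bool) (j : ℕ)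
    (h : j ≠ n) (h2 : ∀ j', 1 ≤ j' → j' < j → c i j' ≠ some (s j')) :
    trk c n i s j = i := by
  rw [trk, if_neg]
  rintro (h' | ⟨j', h1, hlt, he⟩)
  · exact h h'
  · exact h2 j' h1 hlt he

lemma walkOf_chain (n m : ℕ) (c : ℕ → ℕ → Option Bool) (hn : 2 ≤ n) (i : ℕ)
    (hi1 : 1 ≤ i) (him : i ≤ m) (s : ℕ → Bool)
    (hsat : ∃ j, 1 ≤ j ∧ j ≤ n ∧ c i j = some (s j)) :
    List.Chain' (Edge n m c) (walkOf c (Nat.clog 2 m) n i s) := by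
  set d := Nat.clog 2 m with hd
  refine List.isChain_iff_getElem.mpr ?_
  intro k hk
  rw [walkOf_length] at hk
  rw [walkOf_get _ _ _ _ _ k (by omega), walkOf_get _ _ _ _ _ (k+1) (by omega)]
  rcases lt_trichotomy k d with h | h | h
  · -- tree edge
    rw [if_pos (by omega), if_pos (by omega)]
    refine ⟨rfl, by omega, ?_, ?_⟩
    · have h2 : (i-1) / 2^(d-k) = ((i-1)/2^(d-(k+1)))/2 := by
        rw [Nat.div_div_eq_div_mul, ← pow_succ]
        congr 2
        omega
      have h3 := Nat.div_add_mod ((i-1)/2^(d-(k+1))) 2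
      have h4 := Nat.mod_two_eq_zero_or_one ((i-1)/2^(d-(k+1)))
      omega
    · calc (i-1)/2^(d-(k+1)) * 2^(d-(k+1)) ≤ i - 1 := Nat.div_mul_le_self _ _
        _ < m := by omega
  · -- link edge
    rw [if_pos (le_of_eq h), if_neg (by omega)]
    have e0 : d - k = 0 := by omega
    rw [e0]
    simp only [pow_zero, Nat.div_one]
    have hkk : k + 1 - d = 1 := by omega
    rw [hkk, vtxAt, trk_self c n i s 1 (by omega) (by omega)]
    rcases Bool.dichotomy (s 1) with hb | hb <;> rw [hb] <;>
      exact ⟨h.trans hd, by omega, by omega, rfl⟩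
  · -- u/v edges
    rw [if_neg (by omega), if_neg (by omega)]
    set j := k - d with hj
    have hj1 : 1 ≤ j := by omega
    have hjn : j + 1 ≤ n := by omega
    have hk1 : k + 1 - d = j + 1 := by omega
    rw [hk1, vtxAt, vtxAt, edge_U_iff]
    refine ⟨rfl, ?_⟩
    by_cases hesc : ∃ j', 1 ≤ j' ∧ j' < j ∧ c i j' = some (s j')
    · left
      obtain ⟨j', hb1, hb2, hb3⟩ := hesc
      refine ⟨trk_zero _ _ _ _ _ (Or.inr ⟨j', hb1, hb2, hb3⟩),
        trk_zero _ _ _ _ _ (Or.inr ⟨j', hb1, by omega, hb3⟩), by omega, hjn⟩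
    · push_neg at hesc
      have ht : trk c n i s j = i :=
        trk_self _ _ _ _ _ (by omega) (fun j' a b => hesc j' a b)
      rw [ht]
      by_cases hcm : c i j = some (s j)
      · right; left
        exact ⟨hi1, him, trk_zero _ _ _ _ _ (Or.inr ⟨j, hj1, by omega, hcm⟩),
          hj1, hjn, Or.inl hcm⟩
      · by_cases hlast : j + 1 = n
        · right; left
          refine ⟨hi1, him, trk_zero _ _ _ _ _ (Or.inl hlast),
            hj1, hjn, Or.inr ⟨hlast, ?_⟩⟩
          obtain ⟨j0, ha1, ha2, ha3⟩ := hsat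
          have : j0 = n := by
            rcases lt_trichotomy j0 j with h' | h' | h'
            · exact absurd ha3 (hesc j0 ha1 h')
            · exact absurd (h' ▸ ha3) hcm
            · omega
          rw [hlast]
          rwa [this] at ha3
        · right; right
          refine ⟨hi1, him, ?_, hj1, by omega, hcm⟩
          refine trk_self _ _ _ _ _ (by omega) (fun j' a b hc => ?_)
          rcases Nat.lt_succ_iff_lt_or_eq.mp b with b' | b'
          · exact hesc j' a b' hc
          · exact hcm (b' ▸ hc)

lemma walkOf_map_lab (c : ℕ → ℕ → Option Bool) (d n i : ℕ) (s : ℕ → Bool) :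
    (walkOf c d n i s).map lab =
      List.replicate (d+1) true ++ (List.range n).map (fun a => s (a+1)) := by
  simp only [walkOf, List.map_append, List.map_map]
  congr 1
  · rw [List.eq_replicate_iff]
    refine ⟨by simp, ?_⟩
    intro b hb
    simp only [List.mem_map, List.mem_range, Function.comp] at hb
    obtain ⟨a, _, h⟩ := hb
    rw [← h]; rfl
  · congr 1
    funext a
    simp [vtxAt, Function.comp]

lemma walkOf_head (c : ℕ → ℕ → Option Bool) (m n i : ℕ) (s : ℕ → Bool)
    (hi1 : 1 ≤ i) (him : i ≤ m) :
    (walkOf c (Nat.clog 2 m) n i s).head? = some root := by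
  rw [List.head?_eq_getElem?,
    List.getElem?_eq_getElem (by rw [walkOf_length]; omega),
    walkOf_get _ _ _ _ _ 0 (by omega), if_pos (Nat.zero_le _)]
  have h1 : i - 1 < 2 ^ (Nat.clog 2 m - 0) :=
    lt_of_lt_of_le (by omega : i - 1 < m) (by simpa using Nat.le_pow_clog (by norm_num) m)
  rw [Nat.div_eq_of_lt h1]
  rfl

lemma tree_shape (n m : ℕ) (c : ℕ → ℕ → Option Bool) (hm : 1 ≤ m) (w : List Vtx)
    (hc : List.Chain' (Edge n m c) w) (hh : w.head? = some root) :
    ∀ k, ∀ (hk : k < w.length), k ≤ Nat.clog 2 m →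
      ∃ q, w[k] = Vtx.node k q ∧ q * 2^(Nat.clog 2 m - k) < m := by
  intro k
  induction k with
  | zero =>
    intro hk _
    refine ⟨0, ?_, by simp; omega⟩
    rw [List.head?_eq_getElem?, List.getElem?_eq_getElem hk] at hh
    simpa [root] using hh
  | succ k ih =>
    intro hk hkd
    obtain ⟨q, hq, hqm⟩ := ih (by omega) (by omega)
    have hE := List.isChain_iff_getElem.mp hc k (by omega)
    rw [hq] at hE
    cases hx : w[k+1] with
    | node k' q' =>
      rw [hx] at hE
      simp only [Edge] at hE
      obtain ⟨h1, h2, _, h4⟩ := hE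
      subst h1
      exact ⟨q', rfl, h4⟩
    | u i' j' =>
      rw [hx] at hE
      simp only [Edge] at hE
      omega
    | v i' j' =>
      rw [hx] at hE
      simp only [Edge] at hE
      omega

lemma tree_path (n m : ℕ) (c : ℕ → ℕ → Option Bool) (hm : 1 ≤ m) (w : List Vtx)
    (hc : List.Chain' (Edge n m c) w) (hh : w.head? = some root)
    (hd : Nat.clog 2 m < w.length) (p : ℕ)
    (hp : w[Nat.clog 2 m] = Vtx.node (Nat.clog 2 m) p) :
    ∀ j k, k + j = Nat.clog 2 m → ∀ (hk : k < w.length), w[k] = Vtx.node k (p / 2^j) := by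
  intro j
  induction j with
  | zero =>
    intro k hkj hk
    have : k = Nat.clog 2 m := by omega
    subst this
    simpa using hp
  | succ j ih =>
    intro k hkj hk
    have h1 := ih (k+1) (by omega) (by omega)
    obtain ⟨q, hq, _⟩ := tree_shape n m c hm w hc hh k hk (by omega)
    have hE := List.isChain_iff_getElem.mp hc k (by omega)
    rw [hq, h1] at hE
    simp only [Edge] at hE
    obtain ⟨_, _, h3, _⟩ := hE
    have : q = p / 2^j / 2 := by omega
    rw [hq, this, Nat.div_div_eq_div_mul, ← pow_succ]

lemma trk_step (n m : ℕ) (c : ℕ → ℕ → Option Bool) (i : ℕ) (hi1 : 1 ≤ i) (s : ℕ → Bool)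
    (j : ℕ) (hj1 : 1 ≤ j) (i' : ℕ) (b' : Bool)
    (hE : Edge n m c (U (s j) (trk c n i s j) j) (U b' i' (j+1))) :
    i' = trk c n i s (j+1) := by
  rw [edge_U_iff] at hE
  obtain ⟨-, hE⟩ := hE
  by_cases hesc : ∃ j', 1 ≤ j' ∧ j' < j ∧ c i j' = some (s j')
  · rw [trk_zero _ _ _ _ _ (Or.inr hesc)] at hE
    rcases hE with ⟨_, h, _⟩ | ⟨h, _⟩ | ⟨h, _⟩
    · obtain ⟨j', a1, a2, a3⟩ := hesc
      rw [h, trk_zero _ _ _ _ _ (Or.inr ⟨j', a1, by omega, a3⟩)]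
    · omega
    · omega
  · push_neg at hesc
    by_cases hjn : j = n
    · rw [trk_zero _ _ _ _ _ (Or.inl hjn)] at hE
      rcases hE with ⟨_, _, _, h⟩ | ⟨h, _⟩ | ⟨h, _⟩ <;> omega
    · rw [trk_self _ _ _ _ _ hjn (fun a b c => hesc a b c)] at hE
      rcases hE with ⟨h, _⟩ | ⟨_, _, h, _, _, hcond⟩ | ⟨_, _, h, _, hj2, hcm⟩
      · omega
      · rcases hcond with hcm | ⟨hlast, _⟩
        · rw [h, trk_zero _ _ _ _ _ (Or.inr ⟨j, hj1, by omega, hcm⟩)]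
        · rw [h, trk_zero _ _ _ _ _ (Or.inl hlast)]
      · rw [h, trk_self _ _ _ _ _ (by omega) (fun j' a b hc => ?_)]
        rcases Nat.lt_succ_iff_lt_or_eq.mp b with b2 | b2
        · exact hesc j' a b2 hc
        · exact hcm (b2 ▸ hc)

lemma sat_of_last (n m : ℕ) (c : ℕ → ℕ → Option Bool) (i : ℕ) (hi1 : 1 ≤ i) (s : ℕ → Bool)
    (j : ℕ) (hj1 : 1 ≤ j) (hjn : j + 1 = n) (i' : ℕ)
    (hE : Edge n m c (U (s j) (trk c n i s j) j) (U (s (j+1)) i' (j+1))) :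
    ∃ j0, 1 ≤ j0 ∧ j0 ≤ n ∧ c i j0 = some (s j0) := by
  rw [edge_U_iff] at hE
  obtain ⟨-, hE⟩ := hE
  by_cases hesc : ∃ j', 1 ≤ j' ∧ j' < j ∧ c i j' = some (s j')
  · obtain ⟨j', a1, a2, a3⟩ := hesc
    exact ⟨j', a1, by omega, a3⟩
  · push_neg at hesc
    rw [trk_self _ _ _ _ _ (by omega) (fun a b c => hesc a b c)] at hE
    rcases hE with ⟨h, _⟩ | ⟨_, _, _, _, _, hcond⟩ | ⟨_, _, _, _, hj2, _⟩
    · omega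
    · rcases hcond with hcm | ⟨_, hcn⟩
      · exact ⟨j, hj1, by omega, hcm⟩
      · exact ⟨n, by omega, le_rfl, by rw [← hjn] at hcn ⊢; exact hcn⟩
    · omega

lemma walk_eq_walkOf (n m : ℕ) (c : ℕ → ℕ → Option Bool) (hn : 2 ≤ n) (hm : 1 ≤ m)
    (s : ℕ → Bool) (w : List Vtx)
    (hc : List.Chain' (Edge n m c) w) (hh : w.head? = some root)
    (hlen : w.length = Nat.clog 2 m + 1 + n)
    (hlab : ∀ a, (ha : a < n) → lab (w[Nat.clog 2 m + 1 + a]'(by omega)) = s (a+1)) :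
    ∃ i, 1 ≤ i ∧ i ≤ m ∧ (∃ j, 1 ≤ j ∧ j ≤ n ∧ c i j = some (s j)) ∧
      w = walkOf c (Nat.clog 2 m) n i s := by
  set d := Nat.clog 2 m with hd
  obtain ⟨p, hp, hpm⟩ := tree_shape n m c hm w hc hh d (by omega) le_rfl
  rw [Nat.sub_self, pow_zero, mul_one] at hpm
  set i := p + 1 with hi
  have key : ∀ a, (ha : a < n) → w[d+1+a]'(by omega) = vtxAt c n i s (a+1) := by
    intro a
    induction a with
    | zero =>
      intro ha
      have hE := List.isChain_iff_getElem.mp hc d (by omega)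
      rw [hp] at hE
      have hl : lab (w[d+1]'(by omega)) = s (0+1) := hlab 0 ha
      show w[d+1]'(by omega) = vtxAt c n i s (0+1)
      cases hx : w[d+1]'(by omega) with
      | node k' q' =>
        rw [hx] at hE
        simp only [Edge] at hE
        omega
      | u i' j' =>
        rw [hx] at hE hl
        simp only [Edge] at hE
        have hb : s (0+1) = true := by rw [← hl]; rfl
        rw [vtxAt, trk_self c n i s (0+1) (by omega) (by omega), hb]
        simp [U, hE.2.2.1, hE.2.2.2, hi]
      | v i' j' =>
        rw [hx] at hE hl
        simp only [Edge] at hE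
        have hb : s (0+1) = false := by rw [← hl]; rfl
        rw [vtxAt, trk_self c n i s (0+1) (by omega) (by omega), hb]
        simp [U, hE.2.2.1, hE.2.2.2, hi]
    | succ a ih =>
      intro ha
      have hprev := ih (by omega)
      have hE := List.isChain_iff_getElem.mp hc (d+1+a) (by omega)
      rw [hprev] at hE
      have hl : lab (w[d+1+a+1]'(by omega)) = s (a+1+1) := hlab (a+1) ha
      show w[d+1+a+1]'(by omega) = vtxAt c n i s (a+1+1)
      cases hx : w[d+1+a+1]'(by omega) with
      | node k' q' =>
        rw [hx] at hE
        rw [vtxAt] at hE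
        rcases Bool.dichotomy (s (a+1)) with hb | hb <;> rw [hb] at hE <;>
          simp [U, Edge] at hE
      | u i' j' =>
        rw [hx] at hE hl
        have hb : s (a+1+1) = true := by rw [← hl]; rfl
        have hE' : Edge n m c (U (s (a+1)) (trk c n i s (a+1)) (a+1)) (U true i' j') := hE
        have hj' : j' = a + 1 + 1 := ((edge_U_iff n m c _ _ _ _ _ _).mp hE').1
        subst hj'
        rw [← hb] at hE'
        have hT := trk_step n m c i (by omega) s (a+1) (by omega) i' (s (a+1+1)) hE'
        rw [vtxAt, ← hT, hb]
        simp [U]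
      | v i' j' =>
        rw [hx] at hE hl
        have hb : s (a+1+1) = false := by rw [← hl]; rfl
        have hE' : Edge n m c (U (s (a+1)) (trk c n i s (a+1)) (a+1)) (U false i' j') := hE
        have hj' : j' = a + 1 + 1 := ((edge_U_iff n m c _ _ _ _ _ _).mp hE').1
        subst hj'
        rw [← hb] at hE'
        have hT := trk_step n m c i (by omega) s (a+1) (by omega) i' (s (a+1+1)) hE'
        rw [vtxAt, ← hT, hb]
        simp [U]
  refine ⟨i, by omega, by omega, ?_, ?_⟩
  · obtain ⟨q, rfl⟩ : ∃ q, n = q + 2 := ⟨n - 2, by omega⟩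
    have h1 : w[d+1+q]'(by omega) = vtxAt c (q+2) i s (q+1) := key q (by omega)
    have h2 : w[d+1+q+1]'(by omega) = vtxAt c (q+2) i s (q+2) := key (q+1) (by omega)
    have hE := List.isChain_iff_getElem.mp hc (d+1+q) (by omega)
    rw [h1, h2] at hE
    exact sat_of_last (q+2) m c i (by omega) s (q+1) (by omega) rfl (trk c (q+2) i s (q+2)) hE
  · refine List.ext_getElem (by rw [hlen, walkOf_length]) ?_
    intro k h1 h2
    rw [walkOf_get _ _ _ _ _ k (by rw [← walkOf_length c d n i s]; exact h2)]
    by_cases hkd : k ≤ d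
    · rw [if_pos hkd]
      have := tree_path n m c hm w hc hh (by omega) p hp (d - k) k (by omega) h1
      rw [this, show i - 1 = p from by omega]
    · rw [if_neg hkd]
      obtain ⟨a, rfl⟩ : ∃ a, k = d + 1 + a := ⟨k - d - 1, by omega⟩
      rw [key a (by rw [hlen] at h1; omega), show d + 1 + a - d = a + 1 from by omega]

open scoped Classical

lemma occ_rep (n m : ℕ) (c : ℕ → ℕ → Option Bool) (hn : 2 ≤ n) (hm : 1 ≤ m) (s : ℕ → Bool) :
    occG n m c root
      (List.replicate (Nat.clog 2 m + 1) true ++ (List.range n).map (fun a => s (a+1))) =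
    ((Finset.Icc 1 m).filter (fun i => ∃ j, 1 ≤ j ∧ j ≤ n ∧ c i j = some (s j))).card := by
  set d := Nat.clog 2 m with hd
  have hset : {w : List Vtx | List.Chain' (Edge n m c) w ∧ w.head? = some root ∧
      w.map lab = List.replicate (d+1) true ++ (List.range n).map (fun a => s (a+1))} =
      (fun i => walkOf c d n i s) ''
        ↑((Finset.Icc 1 m).filter (fun i => ∃ j, 1 ≤ j ∧ j ≤ n ∧ c i j = some (s j))) := by
    ext w
    simp only [Set.mem_setOf_eq, Set.mem_image, Finset.coe_filter, Finset.mem_Icc,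
      Set.mem_setOf_eq]
    constructor
    · rintro ⟨hc, hh, hlab⟩
      have hlen : w.length = d + 1 + n := by
        have := congrArg List.length hlab
        simp at this
        omega
      have hlab' : ∀ a, (ha : a < n) → lab (w[d+1+a]'(by omega)) = s (a+1) := by
        intro a ha
        have h1 : lab (w[d+1+a]'(by omega)) = (w.map lab)[d+1+a]'(by simp; omega) := by
          simp
        have h2 : (w.map lab)[d+1+a]'(by simp; omega) =
            (List.replicate (d+1) true ++ (List.range n).map (fun a => s (a+1)))[d+1+a]'
              (by simp; omega) :=
          List.getElem_of_eq hlab _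
        rw [h1, h2, List.getElem_append, dif_neg (by simp; omega)]
        simp only [List.getElem_map, List.getElem_range, List.length_replicate]
        congr 1
        omega
      obtain ⟨i, h1, h2, hsat, hw⟩ := walk_eq_walkOf n m c hn hm s w hc hh (by omega) hlab'
      exact ⟨i, ⟨⟨h1, h2⟩, hsat⟩, hw.symm⟩
    · rintro ⟨i, ⟨⟨hi1, him⟩, hsat⟩, rfl⟩
      exact ⟨walkOf_chain n m c hn i hi1 him s hsat, walkOf_head c m n i s hi1 him,
        walkOf_map_lab c d n i s⟩
  rw [occG, hset, Set.ncard_image_of_injOn, Set.ncard_coe_finset]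
  intro a ha b hb hab
  simp only [Finset.coe_filter, Finset.mem_Icc, Set.mem_setOf_eq] at ha hb
  have h1 := List.getElem_of_eq hab (by rw [walkOf_length]; omega : d < (walkOf c d n a s).length)
  rw [walkOf_get _ _ _ _ _ d (by omega), walkOf_get _ _ _ _ _ d (by omega),
    if_pos le_rfl, if_pos le_rfl] at h1
  simp only [Nat.sub_self, pow_zero, Nat.div_one, Vtx.node.injEq] at h1
  omega

lemma occ_zero (n m : ℕ) (c : ℕ → ℕ → Option Bool) (hm : 1 ≤ m) (t : List Bool)
    (hlen : t.length = n + 1 + Nat.clog 2 m)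
    (hk : ∃ k, k ≤ Nat.clog 2 m ∧ t.getD k true = false) :
    occG n m c root t = 0 := by
  set d := Nat.clog 2 m with hd
  rw [occG]
  convert Set.ncard_empty (List Vtx)
  ext w
  simp only [Set.mem_setOf_eq, Set.mem_empty_iff_false, iff_false, not_and]
  intro hc hh hlab
  obtain ⟨k, hkd, hkf⟩ := hk
  have hwlen : w.length = n + 1 + d := by
    have := congrArg List.length hlab
    simp at this
    omega
  obtain ⟨q, hq, _⟩ := tree_shape n m c hm w hc hh k (by omega) hkd
  have h1 : lab (w[k]'(by omega)) = t[k]'(by omega) := by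
    have h2 : lab (w[k]'(by omega)) = (w.map lab)[k]'(by simp; omega) := by simp
    rw [h2]
    exact List.getElem_of_eq hlab _
  rw [hq] at h1
  rw [List.getD_eq_getElem t true (by omega), ← h1] at hkf
  simp [lab] at hkf

lemma rep_decomp (n d : ℕ) (t : List Bool) (hlen : t.length = n + 1 + d)
    (hA : ∀ k, k < d + 1 → t.getD k true = true) :
    t = List.replicate (d+1) true ++
      (List.range n).map (fun a => t.getD (d+(a+1)) false) := by
  refine List.ext_getElem (by simp; omega) ?_
  intro k h1 h2
  rw [List.getElem_append]
  split
  · next h' =>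
    simp only [List.length_replicate] at h'
    rw [List.getElem_replicate]
    have := hA k h'
    rwa [List.getD_eq_getElem t true (by omega)] at this
  · next h' =>
    simp only [List.length_replicate] at h'
    simp only [List.getElem_map, List.getElem_range, List.length_replicate]
    rw [List.getD_eq_getElem t false (by omega)]
    congr 1
    omega

lemma occ_le (n m : ℕ) (c : ℕ → ℕ → Option Bool) (hn : 2 ≤ n) (hm : 1 ≤ m) (t : List Bool)
    (hlen : t.length = n + 1 + Nat.clog 2 m) :
    occG n m c root t ≤ m := by
  set d := Nat.clog 2 m with hd
  by_cases hA : ∀ k, k < d + 1 → t.getD k true = true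
  · rw [rep_decomp n d t (by omega) hA, occ_rep n m c hn hm (fun j => t.getD (d+j) false)]
    calc _ ≤ (Finset.Icc 1 m).card := Finset.card_filter_le _ _
      _ = m := by rw [Nat.card_Icc]; omega
  · push_neg at hA
    obtain ⟨k, hk1, hk2⟩ := hA
    rw [occ_zero n m c hm t (by omega) ⟨k, by omega, by simpa using hk2⟩]
    omega

theorem satisfiable_iff_occ_eq_m (n m : ℕ) (hn : 2 ≤ n) (hm : 1 ≤ m)
    (c : ℕ → ℕ → Option Bool)
    (hne : ∀ i, 1 ≤ i → i ≤ m → ∃ j, 1 ≤ j ∧ j ≤ n ∧ c i j ≠ none) :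
    ((∃ y : ℕ → Bool, ∀ i, 1 ≤ i → i ≤ m →
        ∃ j, 1 ≤ j ∧ j ≤ n ∧ c i j = some (y j)) ↔
      (∃ t : List Bool, t.length = n + 1 + Nat.clog 2 m ∧ occG n m c root t = m)) ∧
    ((∃ y : ℕ → Bool, ∀ i, 1 ≤ i → i ≤ m →
        ∃ j, 1 ≤ j ∧ j ≤ n ∧ c i j = some (y j)) ↔
      sSup {k : ℕ | ∃ t : List Bool,
        t.length = n + 1 + Nat.clog 2 m ∧ occG n m c root t = k} = m) := by
  set d := Nat.clog 2 m with hd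
  have hbdd : BddAbove {k : ℕ | ∃ t : List Bool,
      t.length = n + 1 + d ∧ occG n m c root t = k} := by
    refine ⟨m, ?_⟩
    rintro k ⟨t', h1, rfl⟩
    exact occ_le n m c hn hm t' h1
  have main : (∃ y : ℕ → Bool, ∀ i, 1 ≤ i → i ≤ m →
      ∃ j, 1 ≤ j ∧ j ≤ n ∧ c i j = some (y j)) ↔
      (∃ t : List Bool, t.length = n + 1 + d ∧ occG n m c root t = m) := by
    constructor
    · rintro ⟨y, hy⟩
      refine ⟨List.replicate (d+1) true ++ (List.range n).map (fun a => y (a+1)),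
        by simp; omega, ?_⟩
      rw [occ_rep n m c hn hm y, Finset.filter_eq_self.mpr, Nat.card_Icc]
      · omega
      · intro i hi
        rw [Finset.mem_Icc] at hi
        exact hy i hi.1 hi.2
    · rintro ⟨t, hlen, hocc⟩
      by_cases hA : ∀ k, k < d + 1 → t.getD k true = true
      · rw [rep_decomp n d t (by omega) hA,
          occ_rep n m c hn hm (fun j => t.getD (d+j) false)] at hocc
        refine ⟨fun j => t.getD (d+j) false, fun i h1 h2 => ?_⟩
        have heq := Finset.eq_of_subset_of_card_le
          (Finset.filter_subset
            (fun i => ∃ j, 1 ≤ j ∧ j ≤ n ∧ c i j = some (t.getD (d+j) false))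
            (Finset.Icc 1 m))
          (by rw [hocc, Nat.card_Icc]; omega)
        have hmem : i ∈ (Finset.Icc 1 m).filter
            (fun i => ∃ j, 1 ≤ j ∧ j ≤ n ∧ c i j = some (t.getD (d+j) false)) := by
          rw [heq]
          exact Finset.mem_Icc.mpr ⟨h1, h2⟩
        exact (Finset.mem_filter.mp hmem).2
      · push_neg at hA
        obtain ⟨k, hk1, hk2⟩ := hA
        rw [occ_zero n m c hm t (by omega) ⟨k, by omega, by simpa using hk2⟩] at hocc
        omega
  refine ⟨main, main.trans ?_⟩
  constructor
  · rintro ⟨t, hlen, hocc⟩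
    apply le_antisymm
    · apply csSup_le
      · exact ⟨m, t, hlen, hocc⟩
      · rintro k ⟨t', hlen', rfl⟩
        exact occ_le n m c hn hm t' hlen'
    · exact le_csSup hbdd ⟨t, hlen, hocc⟩
  · intro hsup
    have hne2 : Set.Nonempty {k : ℕ | ∃ t : List Bool,
        t.length = n + 1 + d ∧ occG n m c root t = k} :=
      ⟨occG n m c root (List.replicate (n+1+d) true),
        List.replicate (n+1+d) true, by simp, rfl⟩
    have hmem := Nat.sSup_mem hne2 hbdd
    rw [hsup] at hmem
    exact hmem

end GraphDB
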